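/- For every ζ > 0, the family (Lₙ(ζ))_{n ∈ ℤ} is absolutely summable, i.e. ∑_{n ∈ ℤ} |Lₙ(ζ)| < ∞, and for every real Θ the Fourier series converges to the function it represents: ∑_{n ∈ ℤ} Lₙ(ζ) · e^{inΘ} = |1 + ζe^{−iΘ}| · (1 + ζe^{−iΘ}). -/

import Mathlib

open Real

/-- The `n`-th Fourier coefficient
`Lₙ(ζ) = (1/(2π)) ∫₀^{2π} |1 + ζe^{-iΘ}| (1 + ζe^{-iΘ}) e^{-inΘ} dΘ`. -/
noncomputable def fourierL (n : ℤ) (ζ : ℝ) : ℂ :=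
  (1 / (2 * π)) * ∫ Θ in (0:ℝ)..(2 * π),
    (‖1 + (ζ : ℂ) * Complex.exp (-Complex.I * Θ)‖ : ℂ)
      * (1 + (ζ : ℂ) * Complex.exp (-Complex.I * Θ))
      * Complex.exp (-Complex.I * n * Θ)


namespace Stmt17

noncomputable def g (ζ θ : ℝ) : ℂ := 1 + (ζ : ℂ) * Complex.exp (-Complex.I * θ)
noncomputable def N (ζ θ : ℝ) : ℝ := Real.sqrt (1 + 2*ζ*Real.cos θ + ζ^2)
noncomputable def f (ζ θ : ℝ) : ℂ := (N ζ θ : ℂ) * g ζ θ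
noncomputable def g' (ζ θ : ℝ) : ℂ := (ζ : ℂ) * (-Complex.I) * Complex.exp (-Complex.I * θ)
noncomputable def f' (ζ θ : ℝ) : ℂ :=
  ((-ζ * Real.sin θ / N ζ θ : ℝ) : ℂ) * g ζ θ + (N ζ θ : ℂ) * g' ζ θ

lemma hasDerivAt_g (ζ θ : ℝ) : HasDerivAt (g ζ) (g' ζ θ) θ := by
  have h1 : HasDerivAt (fun y : ℂ => -Complex.I * y) (-Complex.I) (θ : ℂ) := by
    simpa using (hasDerivAt_id (θ : ℂ)).const_mul (-Complex.I)
  have h2 : HasDerivAt (fun θ : ℝ => -Complex.I * (θ : ℂ)) (-Complex.I) θ := h1.comp_ofReal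
  have h3 := h2.cexp
  have h4 := (h3.const_mul (ζ : ℂ)).const_add 1
  have e : g' ζ θ = (ζ:ℂ) * (Complex.exp (-Complex.I * θ) * -Complex.I) := by unfold g'; ring
  rw [e]; exact h4

lemma continuous_N (ζ : ℝ) : Continuous (N ζ) := by
  apply Real.continuous_sqrt.comp
  continuity

lemma continuous_g (ζ : ℝ) : Continuous (g ζ) := by
  unfold g; continuity

lemma continuous_g' (ζ : ℝ) : Continuous (g' ζ) := by
  unfold g'; continuity

lemma hasDerivAt_N {ζ θ : ℝ} (h : N ζ θ ≠ 0) :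
    HasDerivAt (N ζ) (-ζ * Real.sin θ / N ζ θ) θ := by
  have hq : 1 + 2*ζ*Real.cos θ + ζ^2 ≠ 0 := by
    intro h0
    apply h
    rw [N, h0, Real.sqrt_zero]
  have h1 : HasDerivAt (fun x : ℝ => 1 + 2*ζ*Real.cos x + ζ^2)
      (0 + 2*ζ*(-Real.sin θ)) θ :=
    ((hasDerivAt_const θ 1).add ((Real.hasDerivAt_cos θ).const_mul (2*ζ))).add_const (ζ^2)
  have h2 := h1.sqrt hq
  convert h2 using 1
  · rfl
  rw [zero_add, show 2*ζ*(-Real.sin θ) = 2*(ζ*(-Real.sin θ)) by ring,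
    show Real.sqrt (1 + 2*ζ*Real.cos θ + ζ^2) = N ζ θ from rfl,
    mul_div_mul_left _ _ (two_ne_zero)]
  ring

lemma g_re_im (ζ θ : ℝ) : g ζ θ = Complex.mk (1 + ζ * Real.cos θ) (-(ζ * Real.sin θ)) := by
  apply Complex.ext <;>
  simp [g, Complex.exp_re, Complex.exp_im, Complex.add_re, Complex.add_im, Complex.mul_re,
    Complex.mul_im]

lemma normSq_g (ζ θ : ℝ) : Complex.normSq (g ζ θ) = 1 + 2*ζ*Real.cos θ + ζ^2 := by
  rw [g_re_im, Complex.normSq_mk]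
  nlinarith [Real.sin_sq_add_cos_sq θ]

lemma abs_g (ζ θ : ℝ) : ‖g ζ θ‖ = N ζ θ := by
  rw [Complex.norm_def, normSq_g, N]

lemma N_nonneg (ζ θ : ℝ) : 0 ≤ N ζ θ := Real.sqrt_nonneg _

lemma g_eq_zero_of_N {ζ θ : ℝ} (h : N ζ θ = 0) : g ζ θ = 0 := by
  have := abs_g ζ θ
  rw [h] at this
  exact norm_eq_zero.1 this

lemma sin_eq_zero_of_N {ζ θ : ℝ} (hζ : 0 < ζ) (h : N ζ θ = 0) : Real.sin θ = 0 := by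
  have hq : 1 + 2*ζ*Real.cos θ + ζ^2 = 0 := by
    have h0 : 0 ≤ 1 + 2*ζ*Real.cos θ + ζ^2 := by rw [← normSq_g]; exact Complex.normSq_nonneg _
    have h1 : 1 + 2*ζ*Real.cos θ + ζ^2 ≤ 0 := Real.sqrt_eq_zero'.1 h
    linarith
  have hc1 : Real.cos θ ≤ 1 := Real.cos_le_one θ
  have hc2 : -1 ≤ Real.cos θ := Real.neg_one_le_cos θ
  have hz1 : ζ = 1 := by nlinarith
  have hc : Real.cos θ = -1 := by nlinarith
  nlinarith [Real.sin_sq_add_cos_sq θ]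

lemma hasDerivAt_f {ζ : ℝ} (hζ : 0 < ζ) (θ : ℝ) : HasDerivAt (f ζ) (f' ζ θ) θ := by
  by_cases h : N ζ θ = 0
  · -- bad point: g θ = 0
    have hg0 : g ζ θ = 0 := g_eq_zero_of_N h
    have hs0 : Real.sin θ = 0 := sin_eq_zero_of_N hζ h
    have hf'0 : f' ζ θ = 0 := by simp [f', h, hg0, hs0]
    rw [hf'0, hasDerivAt_iff_isLittleO]
    have hf0 : f ζ θ = 0 := by simp [f, hg0]
    simp only [hf0, sub_zero, smul_zero]
    have h1 : (fun θ' : ℝ => ((N ζ θ' : ℂ))) =o[nhds θ] (fun _ => (1:ℝ)) := by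
      rw [Asymptotics.isLittleO_one_iff]
      have : Filter.Tendsto (fun θ' => ((N ζ θ' : ℂ))) (nhds θ) (nhds ((N ζ θ : ℂ))) :=
        (Complex.continuous_ofReal.comp (continuous_N ζ)).continuousAt
      rwa [h, Complex.ofReal_zero] at this
    have h2 : (fun θ' : ℝ => g ζ θ') =O[nhds θ] (fun θ' => θ' - θ) := by
      have := (hasDerivAt_g ζ θ).isBigO_sub
      simpa [hg0] using this
    have := h1.mul_isBigO h2
    simpa [f] using this
  · exact ((hasDerivAt_N h).ofReal_comp.mul (hasDerivAt_g ζ θ))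

lemma continuous_f (ζ : ℝ) : Continuous (f ζ) :=
  (Complex.continuous_ofReal.comp (continuous_N ζ)).mul (continuous_g ζ)

lemma norm_first_term {ζ : ℝ} (hζ : 0 < ζ) (t : ℝ) :
    ‖((-ζ * Real.sin t / N ζ t : ℝ) : ℂ) * g ζ t‖ ≤ ζ * |Real.sin t| := by
  rw [norm_mul, Complex.norm_real, abs_g]
  by_cases h : N ζ t = 0
  · rw [h, mul_zero]
    positivity
  · rw [Real.norm_eq_abs, abs_div, abs_of_nonneg (N_nonneg ζ t), div_mul_cancel₀ _ h,
      abs_mul, abs_neg, abs_of_pos hζ]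

lemma continuous_f' {ζ : ℝ} (hζ : 0 < ζ) : Continuous (f' ζ) := by
  have h2 : Continuous (fun t => (N ζ t : ℂ) * g' ζ t) :=
    (Complex.continuous_ofReal.comp (continuous_N ζ)).mul (continuous_g' ζ)
  have h1 : Continuous (fun t => ((-ζ * Real.sin t / N ζ t : ℝ) : ℂ) * g ζ t) := by
    rw [continuous_iff_continuousAt]
    intro θ
    by_cases h : N ζ θ = 0
    · have hs0 : Real.sin θ = 0 := sin_eq_zero_of_N hζ h
      have hval : ((-ζ * Real.sin θ / N ζ θ : ℝ) : ℂ) * g ζ θ = 0 := by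
        simp [hs0]
      unfold ContinuousAt
      simp only [hval]
      apply squeeze_zero_norm (norm_first_term hζ)
      have : Filter.Tendsto (fun t => ζ * |Real.sin t|) (nhds θ) (nhds (ζ * |Real.sin θ|)) := by
        exact (continuous_const.mul (Real.continuous_sin.abs)).continuousAt
      rwa [hs0, abs_zero, mul_zero] at this
    · exact (Complex.continuous_ofReal.continuousAt.comp
        (((continuous_const.mul Real.continuous_sin).continuousAt).div
          (continuous_N ζ).continuousAt h)).mul (continuous_g ζ).continuousAt
  exact h1.add h2

lemma periodic_g (ζ : ℝ) : Function.Periodic (g ζ) (2*π) := by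
  intro θ
  unfold g
  congr 1
  congr 1
  rw [show -Complex.I * ((θ + 2*π : ℝ) : ℂ) = -Complex.I * θ + (-(2*π*Complex.I)) by
    push_cast; ring, Complex.exp_add]
  rw [Complex.exp_neg, Complex.exp_two_pi_mul_I, inv_one, mul_one]

lemma periodic_N (ζ : ℝ) : Function.Periodic (N ζ) (2*π) := by
  intro θ
  unfold N
  rw [Real.cos_add_two_pi]

lemma periodic_f (ζ : ℝ) : Function.Periodic (f ζ) (2*π) := by
  intro θ
  unfold f
  rw [periodic_g ζ θ, periodic_N ζ θ]

lemma periodic_g' (ζ : ℝ) : Function.Periodic (g' ζ) (2*π) := by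
  intro θ
  unfold g'
  congr 1
  rw [show -Complex.I * ((θ + 2*π : ℝ) : ℂ) = -Complex.I * θ + (-(2*π*Complex.I)) by
    push_cast; ring, Complex.exp_add]
  rw [Complex.exp_neg, Complex.exp_two_pi_mul_I, inv_one, mul_one]

lemma periodic_f' (ζ : ℝ) : Function.Periodic (f' ζ) (2*π) := by
  intro θ
  unfold f'
  rw [periodic_g ζ θ, periodic_N ζ θ, periodic_g' ζ θ, Real.sin_add_two_pi]

instance fact_two_pi : Fact (0 < 2*π) := ⟨by positivity⟩

lemma liftIco_f_eq (ζ Θ : ℝ) : AddCircle.liftIco (2*π) 0 (f ζ) ↑Θ = f ζ Θ := by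
  have hp : 0 < 2*π := by positivity
  have hmem := toIcoMod_mem_Ico hp 0 Θ
  have hcoe : (Θ : AddCircle (2*π)) = ((toIcoMod hp 0 Θ : ℝ) : AddCircle (2*π)) := by
    rw [QuotientAddGroup.eq_iff_sub_mem]
    rw [show Θ - toIcoMod hp 0 Θ = toIcoDiv hp 0 Θ • (2*π) from self_sub_toIcoMod hp 0 Θ]
    exact AddSubgroup.zsmul_mem_zmultiples _ _
  rw [hcoe, AddCircle.liftIco_coe_apply hmem]
  have : toIcoMod hp 0 Θ = Θ - toIcoDiv hp 0 Θ • (2*π) := by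
    have := self_sub_toIcoMod hp 0 Θ
    linarith [self_sub_toIcoMod hp 0 Θ]
  rw [this]
  exact (periodic_f ζ).sub_zsmul_eq _

lemma f_zero_eq (ζ : ℝ) : f ζ 0 = f ζ (0 + 2*π) := by
  have := (periodic_f ζ) 0
  rw [zero_add] at this ⊢
  exact this.symm

end Stmt17

open Stmt17 MeasureTheory


namespace Stmt17

lemma fourierCoeffOn_f_eq (ζ : ℝ) (n : ℤ) (hab : (0:ℝ) < 0 + 2*π) :
    fourierCoeffOn hab (f ζ) n = fourierL n ζ := by
  rw [fourierCoeffOn_eq_integral, fourierL]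
  have hpi : (π:ℂ) ≠ 0 := Complex.ofReal_ne_zero.2 Real.pi_ne_zero
  have hint : ∀ x ∈ Set.uIcc (0:ℝ) (0 + 2*π),
      fourier (-n) (x : AddCircle (0 + 2*π - 0)) • f ζ x =
      (‖1 + (ζ : ℂ) * Complex.exp (-Complex.I * x)‖ : ℂ)
        * (1 + (ζ : ℂ) * Complex.exp (-Complex.I * x))
        * Complex.exp (-Complex.I * n * x) := by
    intro x _
    rw [fourier_coe_apply, smul_eq_mul]
    have h1 : Complex.exp (2 * π * Complex.I * ((-n : ℤ):ℂ) * x / ((0 + 2*π - 0 : ℝ):ℂ)) =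
        Complex.exp (-Complex.I * n * x) := by
      congr 1
      push_cast
      have hpi2 : (π:ℂ) ≠ 0 := hpi
      field_simp
      ring
    rw [h1, show f ζ x = (‖1 + (ζ : ℂ) * Complex.exp (-Complex.I * x)‖ : ℂ)
        * (1 + (ζ : ℂ) * Complex.exp (-Complex.I * x)) by rw [f, ← abs_g]; rfl]
    ring
  rw [intervalIntegral.integral_congr hint]
  rw [show (0:ℝ) + 2*π - 0 = 2*π by ring]
  rw [zero_add]
  rw [Complex.real_smul]
  push_cast
  rfl

end Stmt17

namespace Stmt17

open MeasureTheory AddCircle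

lemma coeff_deriv {ζ : ℝ} (hζ : 0 < ζ) {n : ℤ} (hn : n ≠ 0) (hab : (0:ℝ) < 0 + 2*π) :
    ‖fourierCoeffOn hab (f ζ) n‖ = ‖fourierCoeffOn hab (f' ζ) n‖ / |(n:ℝ)| := by
  rw [fourierCoeffOn_of_hasDerivAt hab hn (fun x _ => hasDerivAt_f hζ x)
    ((continuous_f' hζ).intervalIntegrable _ _)]
  rw [← f_zero_eq ζ, sub_self, mul_zero, zero_sub]
  rw [norm_mul, norm_neg, norm_mul]
  have h1 : ‖(1 / (-2 * (π:ℂ) * Complex.I * (n:ℂ)) : ℂ)‖ = 1 / (2*π*|(n:ℝ)|) := by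
    rw [norm_div, norm_one]
    simp only [norm_mul, norm_neg, Complex.norm_I, Complex.norm_real, Real.norm_eq_abs,
      Complex.norm_intCast, Complex.norm_two]
    rw [abs_of_pos Real.pi_pos]
    ring_nf
  have h2 : ‖(((0:ℝ) + 2*π : ℝ):ℂ) - ((0:ℝ):ℂ)‖ = 2*π := by
    push_cast
    simp only [add_zero, sub_zero, zero_add, norm_mul, Complex.norm_real, Real.norm_eq_abs,
      Complex.norm_ofNat]
    rw [abs_of_pos Real.pi_pos]
  have hne : |(n:ℝ)| ≠ 0 := by
    simp only [ne_eq, abs_eq_zero, Int.cast_eq_zero]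
    exact hn
  rw [h1, h2]
  field_simp

lemma summable_sq {ζ : ℝ} (hζ : 0 < ζ) (hab : (0:ℝ) < 0 + 2*π) :
    Summable (fun n : ℤ => ‖fourierCoeffOn hab (f' ζ) n‖^2) := by
  set F' : C(AddCircle (2*π), ℂ) :=
    ⟨AddCircle.liftIco (2*π) 0 (f' ζ),
      AddCircle.liftIco_zero_continuous
        (by simpa using ((periodic_f' ζ) 0).symm) ((continuous_f' hζ).continuousOn)⟩ with hF'
  have hcoeff : ∀ n : ℤ, fourierCoeff (⇑F') n = fourierCoeffOn hab (f' ζ) n := by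
    intro n
    rw [show ⇑F' = AddCircle.liftIco (2*π) 0 (f' ζ) from rfl,
      fourierCoeff_liftIco_eq (T := 2*π) (f' ζ) n]
  have hmem := lp.memℓp (fourierBasis.repr
    (ContinuousMap.toLp (E := ℂ) 2 haarAddCircle ℂ F'))
  have hsum := (memℓp_gen_iff (by norm_num : 0 < ((2:ENNReal)).toReal)).1 hmem
  have h2 : ((2:ENNReal)).toReal = (2:ℝ) := by norm_num
  rw [h2] at hsum
  have heq : ∀ n : ℤ, ‖(fourierBasis.repr
      (ContinuousMap.toLp (E := ℂ) 2 haarAddCircle ℂ F')) n‖ ^ (2:ℝ) =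
      ‖fourierCoeffOn hab (f' ζ) n‖^2 := by
    intro n
    rw [fourierBasis_repr, fourierCoeff_toLp, hcoeff n]
    norm_cast
  rwa [funext heq] at hsum

lemma summable_norm_coeff {ζ : ℝ} (hζ : 0 < ζ) (hab : (0:ℝ) < 0 + 2*π) :
    Summable (fun n : ℤ => ‖fourierCoeffOn hab (f ζ) n‖) := by
  apply Summable.of_norm_bounded_eventually
    (g := fun n : ℤ => ‖fourierCoeffOn hab (f' ζ) n‖^2 + 1/(n:ℝ)^2)
    ((summable_sq hζ hab).add (summable_one_div_int_pow.2 one_lt_two))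
  rw [Filter.eventually_cofinite]
  apply Set.Finite.subset (Set.finite_singleton 0)
  intro n hn
  simp only [Set.mem_setOf_eq, not_le] at hn
  simp only [Set.mem_singleton_iff]
  by_contra h0
  apply absurd hn
  push_neg
  rw [Real.norm_eq_abs, abs_of_nonneg (norm_nonneg _), coeff_deriv hζ h0 hab]
  have hb : (1:ℝ) ≤ |(n:ℝ)| := by
    rw [← Int.cast_abs]
    exact_mod_cast Int.one_le_abs (by omega)
  have hbpos : (0:ℝ) < |(n:ℝ)| := by linarith
  have hkey : ‖fourierCoeffOn hab (f' ζ) n‖ / |(n:ℝ)| =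
      ‖fourierCoeffOn hab (f' ζ) n‖ * (1/|(n:ℝ)|) := by ring
  have hsq : (1/|(n:ℝ)|)^2 = 1/(n:ℝ)^2 := by
    rw [div_pow, one_pow, sq_abs]
  rw [hkey]
  nlinarith [sq_nonneg (‖fourierCoeffOn hab (f' ζ) n‖ - 1/|(n:ℝ)|),
    norm_nonneg (fourierCoeffOn hab (f' ζ) n), one_div_pos.2 hbpos]

end Stmt17

open Stmt17 MeasureTheory AddCircle

theorem stmt_17 (ζ : ℝ) (hζ : 0 < ζ) :
    Summable (fun n : ℤ => ‖fourierL n ζ‖)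
      ∧ ∀ Θ : ℝ,
        HasSum (fun n : ℤ => fourierL n ζ * Complex.exp (Complex.I * n * Θ))
          ((‖1 + (ζ : ℂ) * Complex.exp (-Complex.I * Θ)‖ : ℂ)
            * (1 + (ζ : ℂ) * Complex.exp (-Complex.I * Θ))) := by
  have hab : (0:ℝ) < 0 + 2*π := by positivity
  set F : C(AddCircle (2*π), ℂ) :=
    ⟨AddCircle.liftIco (2*π) 0 (f ζ),
      AddCircle.liftIco_zero_continuous
        (by simpa using ((periodic_f ζ) 0).symm) ((continuous_f ζ).continuousOn)⟩ with hF
  have hcoeff : ∀ n : ℤ, fourierCoeff (⇑F) n = fourierL n ζ := by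
    intro n
    rw [show ⇑F = AddCircle.liftIco (2*π) 0 (f ζ) from rfl,
      fourierCoeff_liftIco_eq (T := 2*π) (f ζ) n]
    exact fourierCoeffOn_f_eq ζ n _
  have hsn : Summable (fun n : ℤ => ‖fourierCoeff (⇑F) n‖) := by
    have h := summable_norm_coeff hζ hab
    have heq : ∀ n : ℤ, ‖fourierCoeffOn hab (f ζ) n‖ = ‖fourierCoeff (⇑F) n‖ := by
      intro n
      rw [show ⇑F = AddCircle.liftIco (2*π) 0 (f ζ) from rfl,
        fourierCoeff_liftIco_eq (T := 2*π) (f ζ) n]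
    rwa [funext heq] at h
  constructor
  · have heq : ∀ n : ℤ, ‖fourierCoeff (⇑F) n‖ = ‖fourierL n ζ‖ := by
      intro n
      rw [hcoeff n]
    rwa [funext heq] at hsn
  · intro Θ
    have hs := has_pointwise_sum_fourier_series_of_summable (hsn.of_norm) ((Θ : ℝ) : AddCircle (2*π))
    have hval : F ((Θ : ℝ) : AddCircle (2*π)) =
        (‖1 + (ζ : ℂ) * Complex.exp (-Complex.I * Θ)‖ : ℂ)
          * (1 + (ζ : ℂ) * Complex.exp (-Complex.I * Θ)) := by
      rw [show F ((Θ : ℝ) : AddCircle (2*π)) = AddCircle.liftIco (2*π) 0 (f ζ) ↑Θ from rfl,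
        liftIco_f_eq ζ Θ, f, ← abs_g]
      rfl
    have hfun : (fun n : ℤ => fourierL n ζ * Complex.exp (Complex.I * n * Θ)) =
        (fun n : ℤ => fourierCoeff (⇑F) n • fourier n ((Θ : ℝ) : AddCircle (2*π))) := by
      funext n
      rw [hcoeff n, smul_eq_mul, fourier_coe_apply]
      congr 1
      congr 1
      have hpi : (π:ℂ) ≠ 0 := Complex.ofReal_ne_zero.2 Real.pi_ne_zero
      push_cast
      field_simp
    rw [hfun, ← hval]
    exact hs
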